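/- Let F_q be a finite field, r ≥ 1, and 0 ≤ m_i ≤ q-2 for each i. With C = RS_q(m_1+1) ⊗ ... ⊗ RS_q(m_r+1) ⊆ F_q^{q^r}, the dual code C^⊥ equals the sum over i = 1,...,r of F_q^q ⊗ ... ⊗ RS_q(q-m_i-1) ⊗ ... ⊗ F_q^q (with RS_q(q-m_i-1) in the i-th tensor factor). -/

import Mathlib

open Polynomial

/-- Evaluation of a univariate polynomial at every element of `k`, as a linear map. -/
noncomputable def evalAll (k : Type*) [CommRing k] : k[X] →ₗ[k] (k → k) where
  toFun p := fun x => p.eval x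
  map_add' p q := by funext x; simp
  map_smul' c p := by funext x; simp

/-- The Reed–Solomon code `RS_q(m)` of dimension `m`. -/
noncomputable def RS (k : Type*) [Field k] [Fintype k] (m : ℕ) : Submodule k (k → k) :=
  (Polynomial.degreeLT k m).map (evalAll k)

/-- The `r`-fold tensor product of codes `C i ⊆ F^F`, realized inside functions on
`Fin r → F` (i.e. `F^{q^r}`): the span of the pure tensors. -/
def rtensor {F : Type*} [Field F] {r : ℕ} (C : Fin r → Submodule F (F → F)) :
    Submodule F ((Fin r → F) → F) :=
  Submodule.span F
    {x | ∃ c : Fin r → F → F, (∀ i, c i ∈ C i) ∧ x = fun p => ∏ i, c i (p i)}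

/-- The dual code with respect to the standard dot product. -/
def dualCode {k : Type*} [Field k] {ι : Type*} [Fintype ι] (C : Submodule k (ι → k)) :
    Submodule k (ι → k) where
  carrier := {v | ∀ c ∈ C, ∑ i, v i * c i = 0}
  zero_mem' := by simp
  add_mem' := by
    intro u v hu hv c hc
    simp only [Set.mem_setOf_eq] at hu hv
    simp only [Set.mem_setOf_eq, Pi.add_apply, add_mul, Finset.sum_add_distrib,
      hu c hc, hv c hc, add_zero]
  smul_mem' := by
    intro a u hu c hc
    simp only [Set.mem_setOf_eq] at hu
    simp only [Set.mem_setOf_eq, Pi.smul_apply, smul_eq_mul, mul_assoc,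
      ← Finset.mul_sum, hu c hc, mul_zero]

lemma mem_dualCode {k : Type*} [Field k] {ι : Type*} [Fintype ι] {C : Submodule k (ι → k)}
    {v : ι → k} : v ∈ dualCode C ↔ ∀ c ∈ C, ∑ i, v i * c i = 0 := Iff.rfl

/-- The dot product with a fixed vector, as a linear map. -/
noncomputable def dotL {k : Type*} [Field k] {ι : Type*} [Fintype ι] (v : ι → k) :
    (ι → k) →ₗ[k] k where
  toFun c := ∑ i, v i * c i
  map_add' c d := by simp [mul_add, Finset.sum_add_distrib]
  map_smul' t c := by simp [Finset.mul_sum, mul_left_comm]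

section RSLemmas
variable {F : Type*} [Field F] [Fintype F]

lemma RS_eq_span (m : ℕ) :
    RS F m = Submodule.span F ((fun k => fun x : F => x ^ k) '' Set.Iio m) := by
  classical
  rw [RS, degreeLT_eq_span_X_pow, Submodule.map_span]
  congr 1
  ext f
  simp only [Finset.coe_image, Finset.coe_range, Set.image_image, Set.mem_image, Set.mem_Iio]
  constructor <;> rintro ⟨k, hk, rfl⟩ <;> exact ⟨k, hk, by funext x; simp [evalAll]⟩

lemma RS_card_eq_top : RS F (Fintype.card F) = ⊤ := by
  classical
  rw [eq_top_iff]
  intro g _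
  refine Submodule.mem_map.2 ⟨Lagrange.interpolate Finset.univ id g, ?_, ?_⟩
  · rw [Polynomial.mem_degreeLT]
    have := Lagrange.degree_interpolate_lt (s := Finset.univ) (v := id) (r := g)
      (Set.injOn_id _)
    simpa using this
  · funext x
    show eval x (Lagrange.interpolate Finset.univ id g) = g x
    exact Lagrange.eval_interpolate_at_node (s := Finset.univ) (v := id) (i := x) g
      (Set.injOn_id _) (Finset.mem_univ x)

lemma sum_pow_all (k : ℕ) (h1 : k < 2 * (Fintype.card F - 1))
    (h2 : k ≠ Fintype.card F - 1) : ∑ x : F, x ^ k = 0 := by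
  have hq : 2 ≤ Fintype.card F := Fintype.one_lt_card
  rcases lt_or_gt_of_ne h2 with h | h
  · exact FiniteField.sum_pow_lt_card_sub_one F k h
  · have heq : ∀ x : F, x ^ k = x ^ (k - (Fintype.card F - 1)) := by
      intro x
      rcases eq_or_ne x 0 with rfl | hx
      · rw [zero_pow (by omega), zero_pow (by omega)]
      · have hk : k = (k - (Fintype.card F - 1)) + (Fintype.card F - 1) := by omega
        conv_lhs => rw [hk]
        rw [pow_add, FiniteField.pow_card_sub_one_eq_one x hx, mul_one]
    rw [Finset.sum_congr rfl fun x _ => heq x]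
    exact FiniteField.sum_pow_lt_card_sub_one F (k - (Fintype.card F - 1)) (by omega)

lemma sum_pow_q_sub_one : ∑ x : F, x ^ (Fintype.card F - 1) = -1 := by
  classical
  have hq : 2 ≤ Fintype.card F := Fintype.one_lt_card
  have heq : ∀ x : F, x ^ (Fintype.card F - 1) = 1 - (if x = 0 then 1 else 0) := by
    intro x
    split_ifs with h
    · subst h; rw [zero_pow (by omega)]; ring
    · rw [FiniteField.pow_card_sub_one_eq_one x h]; ring
  rw [Finset.sum_congr rfl fun x _ => heq x, Finset.sum_sub_distrib, Finset.sum_const,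
    Finset.sum_ite_eq' Finset.univ (0 : F) (fun _ => (1 : F)), if_pos (Finset.mem_univ _),
    Finset.card_univ, nsmul_eq_mul]
  rw [FiniteField.cast_card_eq_zero]
  ring

end RSLemmas

lemma multilinear_mem_span {R : Type*} [CommSemiring R] {ι : Type*} [Fintype ι]
    {M : ι → Type*} {N : Type*} [∀ i, AddCommMonoid (M i)] [∀ i, Module R (M i)]
    [AddCommMonoid N] [Module R N]
    (f : MultilinearMap R M N) (s : ∀ i, Set (M i)) (c : ∀ i, M i)
    (hc : ∀ i, c i ∈ Submodule.span R (s i)) :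
    f c ∈ Submodule.span R {x | ∃ c', (∀ i, c' i ∈ s i) ∧ x = f c'} := by
  classical
  suffices H : ∀ (t : Finset ι) (c : ∀ i, M i), (∀ i, c i ∈ Submodule.span R (s i)) →
      (∀ i ∉ t, c i ∈ s i) →
      f c ∈ Submodule.span R {x | ∃ c', (∀ i, c' i ∈ s i) ∧ x = f c'} by
    exact H Finset.univ c hc (by simp)
  intro t
  induction t using Finset.induction with
  | empty =>
    intro c h1 h2
    exact Submodule.subset_span ⟨c, fun i => h2 i (by simp), rfl⟩
  | @insert j t hj ih =>
    intro c h1 h2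
    have key : ∀ x ∈ Submodule.span R (s j),
        f (Function.update c j x) ∈
          Submodule.span R {x | ∃ c', (∀ i, c' i ∈ s i) ∧ x = f c'} := by
      intro x hx
      induction hx using Submodule.span_induction with
      | mem y hy =>
        apply ih
        · intro i
          rcases eq_or_ne i j with rfl | h
          · rw [Function.update_self]; exact Submodule.subset_span hy
          · rw [Function.update_of_ne h]; exact h1 i
        · intro i hi
          rcases eq_or_ne i j with rfl | h
          · rw [Function.update_self]; exact hy
          · rw [Function.update_of_ne h]; exact h2 i (by simp [h, hi])
      | zero => rw [f.map_update_zero]; exact Submodule.zero_mem _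
      | add x y _ _ hx hy => rw [f.map_update_add]; exact Submodule.add_mem _ hx hy
      | smul a x _ hx => rw [f.map_update_smul]; exact Submodule.smul_mem _ _ hx
    have := key (c j) (h1 j)
    rwa [Function.update_eq_self] at this

/-- The multilinear "pure tensor" map `(c i)_i ↦ (p ↦ ∏ i, c i (p i))`. -/
noncomputable def tensMul (F : Type*) [CommSemiring F] (r : ℕ) :
    MultilinearMap F (fun _ : Fin r => (F → F)) ((Fin r → F) → F) :=
  MultilinearMap.pi fun p =>
    (MultilinearMap.mkPiAlgebra F (Fin r) F).compLinearMap fun i => LinearMap.proj (p i)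

lemma tensMul_apply {F : Type*} [CommSemiring F] {r : ℕ} (c : Fin r → F → F)
    (p : Fin r → F) : tensMul F r c p = ∏ i, c i (p i) := rfl

/-- The monomial function `p ↦ ∏ i, p i ^ a i`. -/
def Efun {F : Type*} [CommSemiring F] {r : ℕ} (a : Fin r → ℕ) : (Fin r → F) → F :=
  fun p => ∏ i, p i ^ a i

section TensorLemmas
variable {F : Type*} [Field F] [Fintype F] {r : ℕ}

lemma rtensor_eq_span_Efun (C : Fin r → Submodule F (F → F)) (S : Fin r → Set ℕ)
    (hC : ∀ i, C i = Submodule.span F ((fun k => fun x : F => x ^ k) '' S i)) :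
    rtensor C = Submodule.span F (Efun '' Set.pi Set.univ S) := by
  apply le_antisymm
  · rw [rtensor, Submodule.span_le]
    rintro x ⟨c, hc, rfl⟩
    have hx : (fun p => ∏ i, c i (p i)) = tensMul F r c := rfl
    rw [hx]
    have h := multilinear_mem_span (tensMul F r)
      (fun i => (fun k => fun x : F => x ^ k) '' S i) c
      (fun i => by rw [← hC i]; exact hc i)
    refine Submodule.span_mono ?_ h
    rintro y ⟨c', hc', rfl⟩
    choose a ha hae using fun i => hc' i
    refine ⟨a, fun i _ => ha i, ?_⟩
    funext p
    rw [tensMul_apply]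
    exact Finset.prod_congr rfl fun i _ => by rw [← hae i]
  · rw [Submodule.span_le]
    rintro x ⟨a, ha, rfl⟩
    apply Submodule.subset_span
    exact ⟨fun i => fun x => x ^ a i,
      fun i => by rw [hC i]; exact Submodule.subset_span ⟨a i, ha i (Set.mem_univ i), rfl⟩, rfl⟩

lemma pair_Efun (a b : Fin r → ℕ) :
    ∑ p : Fin r → F, Efun a p * Efun b p = ∏ i, ∑ x : F, x ^ (a i + b i) := by
  classical
  have h1 : ∀ p : Fin r → F, Efun a p * Efun b p = ∏ i, p i ^ (a i + b i) := by
    intro p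
    rw [Efun, Efun, ← Finset.prod_mul_distrib]
    exact Finset.prod_congr rfl fun i _ => (pow_add _ _ _).symm
  rw [Finset.sum_congr rfl fun p _ => h1 p, ← Fintype.piFinset_univ]
  exact Finset.sum_prod_piFinset Finset.univ fun i x => x ^ (a i + b i)

lemma top_le_rtensor_top :
    (⊤ : Submodule F ((Fin r → F) → F)) ≤ rtensor (fun _ : Fin r => ⊤) := by
  classical
  intro f _
  have hf : f = ∑ p : Fin r → F, f p • (fun p' => if p = p' then (1 : F) else 0) :=
    pi_eq_sum_univ f
  rw [hf]
  refine Submodule.sum_mem _ fun p _ => Submodule.smul_mem _ _ (Submodule.subset_span ?_)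
  refine ⟨fun i x => if p i = x then 1 else 0, fun i => trivial, ?_⟩
  funext p'
  by_cases h : p = p'
  · subst h; simp
  · rw [if_neg h]
    obtain ⟨i, hi⟩ := Function.ne_iff.1 h
    exact (Finset.prod_eq_zero (Finset.mem_univ i)
      (by show (if p i = p' i then (1:F) else 0) = 0; rw [if_neg hi])).symm

end TensorLemmas

section BasisSection
variable (F : Type*) [Field F] [Fintype F] (r : ℕ)

/-- The monomial family indexed by exponent vectors with entries `< q`. -/
noncomputable def bE : (Fin r → Fin (Fintype.card F)) → ((Fin r → F) → F) :=
  fun a => Efun (fun i => (a i : ℕ))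

variable {F r}

lemma Efun_image_eq :
    Efun '' Set.pi Set.univ (fun _ : Fin r => Set.Iio (Fintype.card F))
      = Set.range (bE F r) := by
  ext x
  constructor
  · rintro ⟨a, ha, rfl⟩
    exact ⟨fun i => ⟨a i, ha i (Set.mem_univ i)⟩, rfl⟩
  · rintro ⟨a, rfl⟩
    exact ⟨fun i => (a i : ℕ), fun i _ => (a i).isLt, rfl⟩

lemma bE_span : ⊤ ≤ Submodule.span F (Set.range (bE F r)) := by
  have h1 : (⊤ : Submodule F ((Fin r → F) → F)) = rtensor (fun _ : Fin r => ⊤) :=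
    le_antisymm top_le_rtensor_top le_top
  have h2 : rtensor (fun _ : Fin r => (⊤ : Submodule F (F → F))) =
      Submodule.span F (Efun '' Set.pi Set.univ fun _ => Set.Iio (Fintype.card F)) :=
    rtensor_eq_span_Efun _ _ (fun _ => by rw [← RS_card_eq_top, RS_eq_span])
  rw [Efun_image_eq] at h2
  exact le_of_eq (h1.trans h2)

lemma card_eq_finrank :
    Fintype.card (Fin r → Fin (Fintype.card F)) = Module.finrank F ((Fin r → F) → F) := by
  simp [Module.finrank_pi, Fintype.card_fun]

/-- The monomial basis of `(F^{q^r})^*`-functions. -/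
noncomputable def basisE : Module.Basis (Fin r → Fin (Fintype.card F)) F ((Fin r → F) → F) :=
  basisOfTopLeSpanOfCardEqFinrank (bE F r) bE_span card_eq_finrank

lemma basisE_apply (a : Fin r → Fin (Fintype.card F)) : basisE a = bE F r a := by
  rw [basisE, coe_basisOfTopLeSpanOfCardEqFinrank]

end BasisSection

/-- For `0 ≤ m i ≤ q - 2`, the dual of `C = RS_q(m 1 + 1) ⊗ ⋯ ⊗ RS_q(m r + 1)` is the
sum over `i` of `F_q^q ⊗ ⋯ ⊗ RS_q(q - m i - 1) ⊗ ⋯ ⊗ F_q^q` (with the Reed–Solomon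
factor in the `i`-th position). -/
theorem dual_tensor_RS (F : Type*) [Field F] [Fintype F] (r : ℕ) (hr : 1 ≤ r)
    (m : Fin r → ℕ) (hm : ∀ i, m i + 2 ≤ Fintype.card F) :
    dualCode (rtensor fun i => RS F (m i + 1)) =
      ⨆ i : Fin r,
        rtensor (fun l => if l = i then RS F (Fintype.card F - m l - 1) else ⊤) := by
  classical
  have hq : 2 ≤ Fintype.card F := Fintype.one_lt_card
  set q := Fintype.card F with hqdef
  set A : Set (Fin r → ℕ) := Set.pi Set.univ (fun i => Set.Iio (m i + 1)) with hA
  set SU : Fin r → Set (Fin r → ℕ) :=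
    fun i => Set.pi Set.univ (fun l => if l = i then Set.Iio (q - m l - 1) else Set.Iio q)
    with hSU
  have hC : rtensor (fun i => RS F (m i + 1)) = Submodule.span F (Efun '' A) :=
    rtensor_eq_span_Efun _ _ (fun i => RS_eq_span _)
  have hD : ∀ i, rtensor (fun l => if l = i then RS F (q - m l - 1) else ⊤) =
      Submodule.span F (Efun '' SU i) := by
    intro i
    apply rtensor_eq_span_Efun
    intro l
    by_cases h : l = i
    · rw [if_pos h, if_pos h, RS_eq_span]
    · rw [if_neg h, if_neg h, ← RS_card_eq_top, RS_eq_span]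
  have hsup : (⨆ i, rtensor fun l => if l = i then RS F (q - m l - 1) else ⊤) =
      Submodule.span F (Efun '' ⋃ i, SU i) := by
    rw [Set.image_iUnion, Submodule.span_iUnion]
    exact iSup_congr hD
  rw [hC, hsup]
  apply le_antisymm
  · -- `C^⊥ ⊆ ∑ D i`
    intro v hv
    set U' : Set (Fin r → Fin q) := {a | ∃ i, (a i : ℕ) < q - m i - 1} with hU'
    set B := basisE (F := F) (r := r) with hB
    have himg : Efun '' ⋃ i, SU i = ⇑B '' U' := by
      have hcoe : ⇑B = bE F r := funext basisE_apply
      rw [hcoe]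
      ext x
      constructor
      · rintro ⟨a, ha, rfl⟩
        obtain ⟨i, hi⟩ := Set.mem_iUnion.1 ha
        have halt : ∀ l, a l < q := by
          intro l
          have h := hi l (Set.mem_univ l)
          by_cases hl : l = i
          · rw [show ((fun l => if l = i then Set.Iio (q - m l - 1) else Set.Iio q) l)
                = Set.Iio (q - m l - 1) from if_pos hl] at h
            simp only [Set.mem_Iio] at h
            have := hm l
            omega
          · rw [show ((fun l => if l = i then Set.Iio (q - m l - 1) else Set.Iio q) l)
                = Set.Iio q from if_neg hl] at h
            simpa using h
        refine ⟨fun l => ⟨a l, halt l⟩, ⟨i, ?_⟩, rfl⟩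
        have h := hi i (Set.mem_univ i)
        rw [show ((fun l => if l = i then Set.Iio (q - m l - 1) else Set.Iio q) i)
            = Set.Iio (q - m i - 1) from if_pos rfl] at h
        simpa using h
      · rintro ⟨a, ⟨i, hi⟩, rfl⟩
        refine ⟨fun l => (a l : ℕ), Set.mem_iUnion.2 ⟨i, fun l _ => ?_⟩, rfl⟩
        show (a l : ℕ) ∈ (if l = i then Set.Iio (q - m l - 1) else Set.Iio q)
        by_cases hl : l = i
        · rw [if_pos hl]; subst hl; exact hi
        · rw [if_neg hl]; exact (a l).isLt
    rw [himg, B.mem_span_image]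
    intro b₀ hb₀
    by_contra hb₀U
    rw [hU', Set.mem_setOf_eq] at hb₀U
    push_neg at hb₀U
    set a : Fin r → ℕ := fun i => q - 1 - (b₀ i : ℕ) with ha
    have haA : a ∈ A := by
      intro i _
      have h1 := hb₀U i
      have h2 := (b₀ i).isLt
      have h3 := hm i
      simp only [Set.mem_Iio, ha]
      omega
    have h0 : ∑ p : Fin r → F, v p * Efun a p = 0 :=
      hv _ (Submodule.subset_span ⟨a, haA, rfl⟩)
    have hrepr : v = ∑ b : Fin r → Fin q, B.repr v b • bE F r b := by
      conv_lhs => rw [← B.sum_repr v]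
      exact Finset.sum_congr rfl fun b _ => by rw [basisE_apply]
    have hsum : ∑ p : Fin r → F, v p * Efun a p
        = ∑ b : Fin r → Fin q, B.repr v b * ∏ i, ∑ x : F, x ^ ((b i : ℕ) + a i) := by
      conv_lhs => rw [hrepr]
      calc ∑ p : Fin r → F, (∑ b : Fin r → Fin q, B.repr v b • bE F r b) p * Efun a p
          = ∑ p : Fin r → F, ∑ b : Fin r → Fin q,
              B.repr v b * (bE F r b p * Efun a p) := by
            refine Finset.sum_congr rfl fun p _ => ?_
            rw [Finset.sum_apply, Finset.sum_mul]
            exact Finset.sum_congr rfl fun b _ => by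
              rw [Pi.smul_apply, smul_eq_mul, mul_assoc]
        _ = ∑ b : Fin r → Fin q, B.repr v b * ∑ p : Fin r → F, bE F r b p * Efun a p := by
            rw [Finset.sum_comm]
            exact Finset.sum_congr rfl fun b _ => (Finset.mul_sum _ _ _).symm
        _ = ∑ b : Fin r → Fin q, B.repr v b * ∏ i, ∑ x : F, x ^ ((b i : ℕ) + a i) :=
            Finset.sum_congr rfl fun b _ => by
              rw [show bE F r b = Efun (fun i => ((b i : ℕ))) from rfl, pair_Efun]
    have hcollapse : ∑ b : Fin r → Fin q, B.repr v b * ∏ i, ∑ x : F, x ^ ((b i : ℕ) + a i)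
        = B.repr v b₀ * (-1 : F) ^ r := by
      rw [Finset.sum_eq_single b₀]
      · congr 1
        have hqe : ∀ i, (b₀ i : ℕ) + a i = q - 1 := by
          intro i
          have h1 := hb₀U i
          have h2 := (b₀ i).isLt
          have h3 := hm i
          simp only [ha]
          omega
        rw [Finset.prod_congr rfl fun i _ => by rw [hqe i, sum_pow_q_sub_one],
          Finset.prod_const, Finset.card_univ, Fintype.card_fin]
      · intro b _ hbne
        obtain ⟨i, hi⟩ := Function.ne_iff.1 hbne
        have hvne : (b i : ℕ) ≠ (b₀ i : ℕ) := fun h => hi (Fin.ext h)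
        have hz : ∑ x : F, x ^ ((b i : ℕ) + a i) = 0 := by
          apply sum_pow_all
          · have h1 := (b i).isLt
            have h2 := hb₀U i
            have h3 := (b₀ i).isLt
            have h4 := hm i
            simp only [ha]
            omega
          · have h2 := hb₀U i
            have h3 := (b₀ i).isLt
            have h4 := hm i
            simp only [ha]
            omega
        exact mul_eq_zero_of_right _ (Finset.prod_eq_zero (Finset.mem_univ i) hz)
      · intro h
        exact absurd (Finset.mem_univ b₀) h
    rw [hsum, hcollapse] at h0
    rcases mul_eq_zero.1 h0 with h | h
    · exact Finsupp.mem_support_iff.1 hb₀ h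
    · exact absurd h (pow_ne_zero r (neg_ne_zero.2 one_ne_zero))
  · -- `∑ D i ⊆ C^⊥`
    rw [Submodule.span_le]
    rintro x ⟨b, hb, rfl⟩
    have key : Submodule.span F (Efun '' A) ≤ LinearMap.ker (dotL (Efun b)) := by
      rw [Submodule.span_le]
      rintro y ⟨a, haA, rfl⟩
      rw [SetLike.mem_coe, LinearMap.mem_ker]
      show ∑ p : Fin r → F, Efun b p * Efun a p = 0
      rw [pair_Efun]
      obtain ⟨i, hbi⟩ := Set.mem_iUnion.1 hb
      have h1 : b i < q - m i - 1 := by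
        have h := hbi i (Set.mem_univ i)
        rw [show ((fun l => if l = i then Set.Iio (q - m l - 1) else Set.Iio q) i)
            = Set.Iio (q - m i - 1) from if_pos rfl] at h
        simpa using h
      have h2 : a i < m i + 1 := by simpa using haA i (Set.mem_univ i)
      refine Finset.prod_eq_zero (Finset.mem_univ i) (sum_pow_all _ ?_ ?_)
      · have := hm i; omega
      · have := hm i; omega
    rw [SetLike.mem_coe, mem_dualCode]
    intro c hc
    exact key hc
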